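/- Let γ = ((i₁ j₁),…,(i_k j_k)) ∈ Σ_n(k) and let l ∈ {1,…,k}. Then every element of C_{γ_{l−1}}(i_l + 1) is strictly greater than i_l. (Note that i_l + 1 ≤ n since i_l < j_l ≤ n.) -/

import Mathlib

/-- ℓ(σ): the number of cycles (orbits) of σ, including fixed points, counted via the
minimal representative of each orbit. -/
noncomputable def cycleCount {n : ℕ} (σ : Equiv.Perm (Fin n)) : ℕ :=
  Set.ncard {x : Fin n | ∀ y, σ.SameCycle x y → x ≤ y}

/-- |σ| := n − ℓ(σ). -/
noncomputable def normPerm {n : ℕ} (σ : Equiv.Perm (Fin n)) : ℕ := n - cycleCount σ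

/-- σ₁ ≼ σ₂ iff |σ₂| = |σ₁| + |σ₁⁻¹σ₂|. -/
def precLe {n : ℕ} (σ₁ σ₂ : Equiv.Perm (Fin n)) : Prop :=
  normPerm σ₂ = normPerm σ₁ + normPerm (σ₁⁻¹ * σ₂)

/-- Σ_n(k): tuples of k transpositions with |τ₁⋯τ_k| = k and τ₁⋯τ_k ≼ (1 … n). -/
def SigmaSet (n k : ℕ) : Set (Fin k → Equiv.Perm (Fin n)) :=
  {τ | (∀ l, (τ l).IsSwap) ∧ normPerm (List.ofFn τ).prod = k ∧
      precLe (List.ofFn τ).prod (finRotate n)}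

/-- γ_m := τ₁∘⋯∘τ_m, the product of the first m entries of the chain. -/
def gammaP {n k : ℕ} (τ : Fin k → Equiv.Perm (Fin n)) (m : ℕ) : Equiv.Perm (Fin n) :=
  ((List.ofFn τ).take m).prod

open Equiv Equiv.Perm

namespace NC

variable {n : ℕ}

def Mset (σ : Perm (Fin n)) : Set (Fin n) := {x | ∀ y, σ.SameCycle x y → x ≤ y}

lemma cycleCount_eq_ncard (σ : Perm (Fin n)) : cycleCount σ = (Mset σ).ncard := rfl

lemma sc_pow (f : Perm (Fin n)) (x : Fin n) (m : ℕ) : f.SameCycle x ((f ^ m) x) :=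
  ⟨(m : ℤ), by rw [zpow_natCast]⟩

/-- every orbit has a minimum which lies in Mset -/
lemma exists_min_orbit (σ : Perm (Fin n)) (x : Fin n) :
    ∃ m, m ∈ Mset σ ∧ σ.SameCycle x m := by
  obtain ⟨m, hm, hmin⟩ := Set.exists_min_image {y | σ.SameCycle x y} id
    (Set.toFinite _) ⟨x, SameCycle.refl σ x⟩
  exact ⟨m, fun y hy => hmin y (SameCycle.trans hm hy), hm⟩

lemma cycleCount_pos (σ : Perm (Fin n)) (hn : 0 < n) : 0 < cycleCount σ := by
  obtain ⟨m, hm, _⟩ := exists_min_orbit σ ⟨0, hn⟩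
  rw [cycleCount_eq_ncard]
  exact (Set.ncard_pos (Set.toFinite _)).mpr ⟨m, hm⟩

lemma cycleCount_le (σ : Perm (Fin n)) : cycleCount σ ≤ n := by
  rw [cycleCount_eq_ncard]
  calc (Mset σ).ncard ≤ (Set.univ : Set (Fin n)).ncard :=
        Set.ncard_le_ncard (Set.subset_univ _) (Set.toFinite _)
    _ = n := by rw [Set.ncard_univ]; simp

lemma cycleCount_one : cycleCount (1 : Perm (Fin n)) = n := by
  rw [cycleCount_eq_ncard]
  have : Mset (1 : Perm (Fin n)) = Set.univ := by
    ext x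
    simp only [Mset, Set.mem_setOf_eq, Set.mem_univ, iff_true, sameCycle_one]
    rintro y rfl; exact le_refl _
  rw [this, Set.ncard_univ]; simp

lemma cycleCount_eq_n_iff (σ : Perm (Fin n)) (h : cycleCount σ = n) : σ = 1 := by
  have huniv : Mset σ = Set.univ := by
    apply Set.eq_of_subset_of_ncard_le (Set.subset_univ _)
    rw [← cycleCount_eq_ncard, h, Set.ncard_univ]; simp
  ext x
  have h1 : x ∈ Mset σ := huniv ▸ Set.mem_univ x
  have h2 : σ x ∈ Mset σ := huniv ▸ Set.mem_univ (σ x)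
  have hx1 : x ≤ σ x := h1 (σ x) (by exact ⟨(1 : ℤ), by simp⟩)
  have hx2 : σ x ≤ x := h2 x (SameCycle.symm ⟨(1 : ℤ), by simp⟩)
  simp [le_antisymm hx2 hx1]


lemma mulswap_apply (σ : Perm (Fin n)) (a b z : Fin n) :
    (σ * Equiv.swap a b) z = if z = a then σ b else if z = b then σ a else σ z := by
  rw [Perm.mul_apply, swap_apply_def]
  split_ifs <;> rfl

/-- the merged relation -/
def R (σ : Perm (Fin n)) (a b x y : Fin n) : Prop :=
  σ.SameCycle x y ∨ (σ.SameCycle x a ∧ σ.SameCycle b y) ∨ (σ.SameCycle x b ∧ σ.SameCycle a y)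

lemma sc_walk (σ : Perm (Fin n)) (a b : Fin n) (h : ¬σ.SameCycle a b) :
    ∀ t : ℕ, (σ * Equiv.swap a b).SameCycle a ((σ ^ (t + 1)) b) := by
  intro t
  induction t with
  | zero =>
    have h1 : (σ ^ 1) b = (σ * Equiv.swap a b) a := by
      simp [Perm.mul_apply, swap_apply_left]
    rw [h1]
    exact (SameCycle.refl _ a).apply_right
  | succ t ih =>
    set z := (σ ^ (t + 1)) b with hz
    have hscz : σ.SameCycle b z := sc_pow σ b (t + 1)
    have hza : z ≠ a := fun hc => h ((hc ▸ hscz).symm)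
    have hstep : (σ ^ (t + 1 + 1)) b = σ z := by
      rw [hz, ← Perm.mul_apply, ← pow_succ']
    by_cases hzb : z = b
    · have : σ z = (σ * Equiv.swap a b) a := by simp [Perm.mul_apply, swap_apply_left, hzb]
      rw [hstep, this]
      exact (SameCycle.refl _ a).apply_right
    · have : σ z = (σ * Equiv.swap a b) z := by
        rw [mulswap_apply]; simp [hza, hzb]
      rw [hstep, this]
      exact ih.apply_right

lemma sc_ab (σ : Perm (Fin n)) (a b : Fin n) (h : ¬σ.SameCycle a b) :
    (σ * Equiv.swap a b).SameCycle a b := by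
  have hpos : 0 < orderOf σ := orderOf_pos σ
  obtain ⟨s, hs⟩ : ∃ s, orderOf σ = s + 1 := ⟨orderOf σ - 1, by omega⟩
  have := sc_walk σ a b h s
  rw [← hs, pow_orderOf_eq_one] at this
  simpa using this

lemma sc_of_b (σ : Perm (Fin n)) (a b : Fin n) (h : ¬σ.SameCycle a b) :
    ∀ z, σ.SameCycle b z → (σ * Equiv.swap a b).SameCycle a z := by
  intro z hz
  obtain ⟨t, _, rfl⟩ := hz.exists_pow_eq'
  cases t with
  | zero => simpa using sc_ab σ a b h
  | succ s => exact sc_walk σ a b h s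

lemma sc_of_a (σ : Perm (Fin n)) (a b : Fin n) (h : ¬σ.SameCycle a b) :
    ∀ z, σ.SameCycle a z → (σ * Equiv.swap a b).SameCycle a z := by
  intro z hz
  have h' : ¬σ.SameCycle b a := fun hc => h hc.symm
  have hba : (σ * Equiv.swap b a).SameCycle b z := sc_of_b σ b a h' z hz
  rw [swap_comm] at hba
  exact (sc_ab σ a b h).trans hba

lemma sc_untouched (σ : Perm (Fin n)) (a b x y : Fin n)
    (hxa : ¬σ.SameCycle x a) (hxb : ¬σ.SameCycle x b) (h : σ.SameCycle x y) :
    (σ * Equiv.swap a b).SameCycle x y := by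
  obtain ⟨m, _, rfl⟩ := h.exists_pow_eq'
  clear * - hxa hxb
  induction m with
  | zero => simpa using SameCycle.refl _ x
  | succ m ih =>
    set z := (σ ^ m) x with hz
    have hscz : σ.SameCycle x z := sc_pow σ x m
    have hza : z ≠ a := fun hc => hxa (hc ▸ hscz)
    have hzb : z ≠ b := fun hc => hxb (hc ▸ hscz)
    have hstep : (σ ^ (m + 1)) x = (σ * Equiv.swap a b) z := by
      rw [mulswap_apply]; simp only [hza, hzb, if_false]
      rw [hz, ← Perm.mul_apply, ← pow_succ']
    rw [hstep]
    exact ih.apply_right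

lemma merge_mpr (σ : Perm (Fin n)) (a b x y : Fin n) (h : ¬σ.SameCycle a b)
    (hr : R σ a b x y) : (σ * Equiv.swap a b).SameCycle x y := by
  rcases hr with hxy | ⟨hxa, hby⟩ | ⟨hxb, hay⟩
  · by_cases h1 : σ.SameCycle a x
    · exact ((sc_of_a σ a b h x h1).symm.trans (sc_of_a σ a b h y (h1.trans hxy)))
    · by_cases h2 : σ.SameCycle b x
      · exact ((sc_of_b σ a b h x h2).symm.trans (sc_of_b σ a b h y (h2.trans hxy)))
      · exact sc_untouched σ a b x y (fun hc => h1 hc.symm) (fun hc => h2 hc.symm) hxy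
  · exact (sc_of_a σ a b h x hxa.symm).symm.trans (sc_of_b σ a b h y hby)
  · exact (sc_of_b σ a b h x hxb.symm).symm.trans (sc_of_a σ a b h y hay)

lemma merge_mp (σ : Perm (Fin n)) (a b x y : Fin n) (h : ¬σ.SameCycle a b)
    (hsc : (σ * Equiv.swap a b).SameCycle x y) : R σ a b x y := by
  obtain ⟨m, _, rfl⟩ := hsc.exists_pow_eq'
  clear * - h
  induction m with
  | zero => exact Or.inl (by simpa using SameCycle.refl σ x)
  | succ m ih =>
    set z := ((σ * Equiv.swap a b) ^ m) x with hz
    have hstep : ((σ * Equiv.swap a b) ^ (m + 1)) x = (σ * Equiv.swap a b) z := by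
      rw [hz, ← Perm.mul_apply, ← pow_succ']
    rw [hstep]
    by_cases hza : z = a
    · have : (σ * Equiv.swap a b) z = σ b := by simp [hza, Perm.mul_apply, swap_apply_left]
      rw [this]
      rcases (hza ▸ ih) with hxa | ⟨hxa, hba⟩ | ⟨hxb, haa⟩
      · exact Or.inr (Or.inl ⟨hxa, (SameCycle.refl σ b).apply_right⟩)
      · exact absurd hba.symm h
      · exact Or.inl hxb.apply_right
    · by_cases hzb : z = b
      · have : (σ * Equiv.swap a b) z = σ a := by simp [hzb, Perm.mul_apply, swap_apply_right]
        rw [this]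
        rcases (hzb ▸ ih) with hxb | ⟨hxa, hbb⟩ | ⟨hxb, hab⟩
        · exact Or.inr (Or.inr ⟨hxb, (SameCycle.refl σ a).apply_right⟩)
        · exact Or.inl hxa.apply_right
        · exact absurd hab h
      · have : (σ * Equiv.swap a b) z = σ z := by rw [mulswap_apply]; simp [hza, hzb]
        rw [this]
        rcases ih with hxz | ⟨hxa, hbz⟩ | ⟨hxb, haz⟩
        · exact Or.inl hxz.apply_right
        · exact Or.inr (Or.inl ⟨hxa, hbz.apply_right⟩)
        · exact Or.inr (Or.inr ⟨hxb, haz.apply_right⟩)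

lemma sameCycle_mul_swap_iff (σ : Perm (Fin n)) (a b x y : Fin n) (h : ¬σ.SameCycle a b) :
    (σ * Equiv.swap a b).SameCycle x y ↔ R σ a b x y :=
  ⟨merge_mp σ a b x y h, merge_mpr σ a b x y h⟩


lemma Mset_merge (σ : Perm (Fin n)) (a b α β : Fin n) (h : ¬σ.SameCycle a b)
    (hαa : σ.SameCycle α a) (hα : α ∈ Mset σ)
    (hβb : σ.SameCycle β b) (hβ : β ∈ Mset σ) (hαβ : α ≤ β) :
    Mset (σ * Equiv.swap a b) = Mset σ \ {β} := by
  have hαβne : α ≠ β := fun hc => h (hαa.symm.trans (hc ▸ hβb))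
  have hαltβ : α < β := lt_of_le_of_ne hαβ hαβne
  ext x
  constructor
  · intro hx
    refine ⟨fun y hy => hx y ((sameCycle_mul_swap_iff σ a b x y h).mpr (Or.inl hy)), ?_⟩
    simp only [Set.mem_singleton_iff]
    intro hc
    subst hc
    have hscβα : (σ * Equiv.swap a b).SameCycle x α :=
      (sameCycle_mul_swap_iff σ a b x α h).mpr (Or.inr (Or.inr ⟨hβb, hαa.symm⟩))
    exact absurd (hx α hscβα) (not_le.mpr hαltβ)
  · rintro ⟨hxM, hxβ⟩
    simp only [Set.mem_singleton_iff] at hxβ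
    intro y hy
    rcases (sameCycle_mul_swap_iff σ a b x y h).mp hy with hxy | ⟨hxa, hby⟩ | ⟨hxb, hay⟩
    · exact hxM y hxy
    · have hxα : x = α :=
        le_antisymm (hxM α (hxa.trans hαa.symm)) (hα x (hαa.trans hxa.symm))
      calc x ≤ β := hxα ▸ hαβ
        _ ≤ y := hβ y (hβb.trans hby)
    · exact absurd (le_antisymm (hxM β (hxb.trans hβb.symm)) (hβ x (hβb.trans hxb.symm))) hxβ

lemma cycleCount_merge (σ : Perm (Fin n)) (a b : Fin n) (h : ¬σ.SameCycle a b) :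
    cycleCount σ = cycleCount (σ * Equiv.swap a b) + 1 := by
  have key : ∀ (a b α β : Fin n), ¬σ.SameCycle a b → σ.SameCycle α a → α ∈ Mset σ →
      σ.SameCycle β b → β ∈ Mset σ → α ≤ β →
      cycleCount σ = cycleCount (σ * Equiv.swap a b) + 1 := by
    intro a b α β h hαa hαA hβb hβB hαβ
    have hM := Mset_merge σ a b α β h hαa hαA hβb hβB hαβ
    have hnot : β ∉ Mset (σ * Equiv.swap a b) := by
      rw [hM]; exact fun hc => hc.2 rfl
    have hins : insert β (Mset (σ * Equiv.swap a b)) = Mset σ := by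
      rw [hM, Set.insert_diff_singleton, Set.insert_eq_self.mpr hβB]
    rw [cycleCount_eq_ncard, cycleCount_eq_ncard, ← hins,
      Set.ncard_insert_of_notMem hnot (Set.toFinite _)]
  obtain ⟨α, hα, hαa'⟩ := exists_min_orbit σ a
  obtain ⟨β, hβ, hβb'⟩ := exists_min_orbit σ b
  rcases le_total α β with hle | hle
  · exact key a b α β h hαa'.symm hα hβb'.symm hβ hle
  · rw [swap_comm]
    exact key b a β α (fun hc => h hc.symm) hβb'.symm hβ hαa'.symm hα hle

lemma not_sameCycle_mul_swap (σ : Perm (Fin n)) (a b : Fin n) (hab : a ≠ b)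
    (h : σ.SameCycle a b) : ¬(σ * Equiv.swap a b).SameCycle a b := by
  have hex : ∃ t, (σ ^ t) b = a := by
    obtain ⟨t, _, ht⟩ := h.symm.exists_pow_eq'
    exact ⟨t, ht⟩
  classical
  set r := Nat.find hex with hrdef
  have hr : (σ ^ r) b = a := Nat.find_spec hex
  have hrmin : ∀ t, t < r → (σ ^ t) b ≠ a := fun t ht => Nat.find_min hex ht
  have hr1 : 1 ≤ r := by
    rcases Nat.eq_zero_or_pos r with h0 | h1
    · exfalso; rw [h0, pow_zero] at hr; exact hab hr.symm
    · exact h1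
  set S : Set (Fin n) := {z | z = a ∨ ∃ t, 1 ≤ t ∧ t ≤ r - 1 ∧ (σ ^ t) b = z} with hS
  have hbS : b ∉ S := by
    rintro (hc | ⟨t, ht1, ht2, ht3⟩)
    · exact hab hc.symm
    · have : (σ ^ (r - t)) b = a := by
        have hsplit : (σ ^ (r - t)) ((σ ^ t) b) = (σ ^ r) b := by
          rw [← Perm.mul_apply, ← pow_add]
          congr 2
          omega
        rw [ht3] at hsplit
        rw [hsplit, hr]
      exact hrmin (r - t) (by omega) this
  have hinv : ∀ z ∈ S, (σ * Equiv.swap a b) z ∈ S := by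
    rintro z hz
    rcases hz with hz | ⟨t, ht1, ht2, ht3⟩
    · rw [hz]
      have hza : (σ * Equiv.swap a b) a = σ b := by
        rw [mulswap_apply]; simp
      rw [hza]
      rcases Nat.eq_or_lt_of_le hr1 with h1 | h2
      · left
        have : (σ ^ 1) b = a := by rw [← h1] at hr; exact hr
        simpa using this
      · right; exact ⟨1, le_refl _, by omega, by simp⟩
    · have hza : z ≠ a := ht3 ▸ hrmin t (by omega)
      have hzb : z ≠ b := fun hc => hbS (hc ▸ (Or.inr ⟨t, ht1, ht2, ht3⟩))
      have hstep : (σ * Equiv.swap a b) z = (σ ^ (t + 1)) b := by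
        rw [mulswap_apply]
        simp only [hza, hzb, if_false]
        rw [← ht3, ← Perm.mul_apply, ← pow_succ']
      rw [hstep]
      rcases Nat.lt_or_ge t (r - 1) with hlt | hge
      · right; exact ⟨t + 1, by omega, by omega, rfl⟩
      · left
        have ht1r : t + 1 = r := by omega
        rw [ht1r, hr]
  have hmem : ∀ m : ℕ, ((σ * Equiv.swap a b) ^ m) a ∈ S := by
    intro m
    induction m with
    | zero => simp [hS]
    | succ m ih =>
      have hstep : ((σ * Equiv.swap a b) ^ (m + 1)) a =
          (σ * Equiv.swap a b) (((σ * Equiv.swap a b) ^ m) a) := by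
        rw [← Perm.mul_apply, ← pow_succ']
      rw [hstep]
      exact hinv _ ih
  intro hsc
  obtain ⟨m, _, hm⟩ := hsc.exists_pow_eq'
  exact hbS (hm ▸ hmem m)

lemma cycleCount_split (σ : Perm (Fin n)) (a b : Fin n) (hab : a ≠ b)
    (h : σ.SameCycle a b) : cycleCount (σ * Equiv.swap a b) = cycleCount σ + 1 := by
  have h2 := not_sameCycle_mul_swap σ a b hab h
  have h3 := cycleCount_merge (σ * Equiv.swap a b) a b h2
  rwa [mul_assoc, swap_mul_self, mul_one] at h3

lemma cycleCount_mul_swap_dichotomy (σ : Perm (Fin n)) (a b : Fin n) (hab : a ≠ b) :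
    cycleCount σ ≤ cycleCount (σ * Equiv.swap a b) + 1 ∧
    cycleCount (σ * Equiv.swap a b) ≤ cycleCount σ + 1 := by
  by_cases h : σ.SameCycle a b
  · rw [cycleCount_split σ a b hab h]; omega
  · rw [cycleCount_merge σ a b h]; omega

lemma swap_mul_eq (σ : Perm (Fin n)) (a b : Fin n) :
    Equiv.swap a b * σ = σ * Equiv.swap (σ⁻¹ a) (σ⁻¹ b) := by
  have h := Equiv.swap_apply_apply σ (σ⁻¹ a) (σ⁻¹ b)
  simp only [Equiv.Perm.coe_inv, Equiv.apply_symm_apply] at h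
  rw [h, mul_assoc, mul_assoc, inv_mul_cancel, mul_one]; rfl

lemma cycleCount_swap_mul_split (σ : Perm (Fin n)) (a b : Fin n) (hab : a ≠ b)
    (h : σ.SameCycle a b) : cycleCount (Equiv.swap a b * σ) = cycleCount σ + 1 := by
  rw [swap_mul_eq]
  exact cycleCount_split σ _ _ (fun hc => hab (by simpa using congrArg σ hc))
    (by simpa using h)

lemma cycleCount_swap_mul_merge (σ : Perm (Fin n)) (a b : Fin n)
    (h : ¬σ.SameCycle a b) : cycleCount σ = cycleCount (Equiv.swap a b * σ) + 1 := by
  rw [swap_mul_eq]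
  exact cycleCount_merge σ _ _ (by simpa using h)

lemma cycleCount_swap_mul_dichotomy (σ : Perm (Fin n)) (a b : Fin n) (hab : a ≠ b) :
    cycleCount σ ≤ cycleCount (Equiv.swap a b * σ) + 1 ∧
    cycleCount (Equiv.swap a b * σ) ≤ cycleCount σ + 1 := by
  by_cases h : σ.SameCycle a b
  · rw [cycleCount_swap_mul_split σ a b hab h]; omega
  · rw [cycleCount_swap_mul_merge σ a b h]; omega


lemma exists_swap_list : ∀ (d : ℕ) (σ : Perm (Fin n)), cycleCount σ + d = n →
    ∃ l : List (Perm (Fin n)), (∀ t ∈ l, t.IsSwap) ∧ l.prod = σ ∧ l.length = d := by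
  intro d
  induction d with
  | zero =>
    intro σ hσ
    have : σ = 1 := cycleCount_eq_n_iff σ (by omega)
    exact ⟨[], by simp, by simp [this], rfl⟩
  | succ d ih =>
    intro σ hσ
    have hσ1 : σ ≠ 1 := by
      intro hc
      rw [hc, cycleCount_one] at hσ
      omega
    obtain ⟨x, hx⟩ : ∃ x, σ x ≠ x := by
      by_contra hc
      push_neg at hc
      exact hσ1 (Equiv.ext hc)
    have hsc : σ.SameCycle x (σ x) := ⟨(1 : ℤ), by simp⟩
    have hsplit := cycleCount_swap_mul_split σ x (σ x) (Ne.symm hx) hsc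
    obtain ⟨l, hl1, hl2, hl3⟩ := ih (Equiv.swap x (σ x) * σ) (by omega)
    refine ⟨Equiv.swap x (σ x) :: l, ?_, ?_, by simp [hl3]⟩
    · intro t ht
      rcases List.mem_cons.mp ht with rfl | ht
      · exact ⟨x, σ x, Ne.symm hx, rfl⟩
      · exact hl1 t ht
    · rw [List.prod_cons, hl2, ← mul_assoc, swap_mul_self, one_mul]

lemma cycleCount_list_le (l : List (Perm (Fin n))) (hl : ∀ t ∈ l, t.IsSwap)
    (ρ : Perm (Fin n)) : cycleCount ρ ≤ cycleCount (l.prod * ρ) + l.length := by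
  induction l with
  | nil => simp
  | cons t l ih =>
    obtain ⟨a, b, hab, rfl⟩ := hl t List.mem_cons_self
    have h1 := ih (fun s hs => hl s (List.mem_cons_of_mem _ hs))
    have h2 := (cycleCount_swap_mul_dichotomy (l.prod * ρ) a b hab).1
    rw [List.prod_cons, mul_assoc]
    simp only [List.length_cons]
    omega

lemma cycleCount_triangle (σ ρ : Perm (Fin n)) :
    cycleCount σ + cycleCount ρ ≤ n + cycleCount (σ * ρ) := by
  obtain ⟨l, hl1, hl2, hl3⟩ := exists_swap_list (n - cycleCount σ) σ
    (by have := cycleCount_le σ; omega)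
  have := cycleCount_list_le l hl1 ρ
  rw [hl2] at this
  have hle := cycleCount_le σ
  omega


open Fin.NatCast Fin.CommRing in
lemma rot_pow (N : ℕ) : ∀ (m : ℕ) (t : Fin (N + 1)),
    ((finRotate (N + 1)) ^ m) t = t + (m : Fin (N + 1)) := by
  intro m
  induction m with
  | zero => intro t; simp
  | succ m ih =>
    intro t
    rw [pow_succ', Perm.mul_apply, ih, finRotate_succ_apply, Nat.cast_add, Nat.cast_one]
    ring

open Fin.NatCast Fin.CommRing in
lemma sc_rot (N : ℕ) (u v : Fin (N + 1)) : (finRotate (N + 1)).SameCycle u v := by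
  refine ⟨(((v - u).val : ℕ) : ℤ), ?_⟩
  rw [zpow_natCast, rot_pow, Fin.cast_val_eq_self]
  ring

lemma cycleCount_finRotate (N : ℕ) : cycleCount (finRotate (N + 1)) = 1 := by
  rw [cycleCount_eq_ncard]
  have h : Mset (finRotate (N + 1)) = {0} := by
    ext x
    simp only [Mset, Set.mem_setOf_eq, Set.mem_singleton_iff]
    constructor
    · intro h
      exact le_antisymm (h 0 (sc_rot N x 0)) (Fin.zero_le x)
    · rintro rfl y _
      exact Fin.zero_le y
  rw [h, Set.ncard_singleton]

lemma interval_step (N : ℕ) (u v : Fin (N + 1)) (huv : u < v) (t : Fin (N + 1)) :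
    (u ≤ (Equiv.swap u v * finRotate (N + 1)) t ∧ (Equiv.swap u v * finRotate (N + 1)) t < v)
      ↔ (u ≤ t ∧ t < v) := by
  have huvv : u.val < v.val := huv
  have hvN : v.val ≤ N := Nat.lt_succ_iff.mp v.isLt
  have htN : t.val ≤ N := Nat.lt_succ_iff.mp t.isLt
  rw [Perm.mul_apply, finRotate_succ_apply]
  simp only [Fin.le_def, Fin.lt_def]
  by_cases ht : t = Fin.last N
  · have hs : (t + 1).val = 0 := by rw [Fin.val_add_one]; simp [ht]
    have htv : t.val = N := by rw [ht]; rfl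
    by_cases hu : u = 0
    · have hsu : t + 1 = u := by rw [hu]; exact Fin.ext (by simp [hs])
      rw [hsu, swap_apply_left]
      omega
    · have huval : u.val ≠ 0 := fun hc => hu (Fin.ext hc)
      have hsu : t + 1 ≠ u := fun hc => huval (by rw [← hc, hs])
      have hsv : t + 1 ≠ v := fun hc => (by omega : v.val ≠ 0) (by rw [← hc, hs])
      rw [swap_apply_of_ne_of_ne hsu hsv]
      omega
  · have hs : (t + 1).val = t.val + 1 := by rw [Fin.val_add_one]; simp [ht]
    by_cases hsu : t + 1 = u
    · have huval : u.val = t.val + 1 := by rw [← hsu, hs]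
      rw [hsu, swap_apply_left]
      omega
    · by_cases hsv : t + 1 = v
      · have hvval : v.val = t.val + 1 := by rw [← hsv, hs]
        rw [hsv, swap_apply_right]
        omega
      · rw [swap_apply_of_ne_of_ne hsu hsv]
        have h1 : u.val ≠ t.val + 1 := fun hc => hsu (Fin.ext (by rw [hs, hc]))
        have h2 : v.val ≠ t.val + 1 := fun hc => hsv (Fin.ext (by rw [hs, hc]))
        rw [hs]
        omega

lemma interval_invariant (N : ℕ) (u v : Fin (N + 1)) (huv : u < v) (a b : Fin (N + 1))
    (h : (Equiv.swap u v * finRotate (N + 1)).SameCycle a b) :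
    ((u ≤ a ∧ a < v) ↔ (u ≤ b ∧ b < v)) := by
  have key : ∀ m : ℕ, ((u ≤ a ∧ a < v) ↔
      (u ≤ ((Equiv.swap u v * finRotate (N + 1)) ^ m) a ∧
        ((Equiv.swap u v * finRotate (N + 1)) ^ m) a < v)) := by
    intro m
    induction m with
    | zero => simp
    | succ m ih =>
      have hstep : ((Equiv.swap u v * finRotate (N + 1)) ^ (m + 1)) a =
          (Equiv.swap u v * finRotate (N + 1)) (((Equiv.swap u v * finRotate (N + 1)) ^ m) a) := by
        rw [← Perm.mul_apply, ← pow_succ']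
      rw [hstep]
      exact ih.trans (interval_step N u v huv _).symm
  obtain ⟨m, _, rfl⟩ := h.exists_pow_eq'
  exact key m

lemma not_sc_rot (N : ℕ) (u v a b : Fin (N + 1)) (huv : u < v)
    (ha : u ≤ a ∧ a < v) (hb : ¬(u ≤ b ∧ b < v)) :
    ¬(Equiv.swap u v * finRotate (N + 1)).SameCycle a b :=
  fun h => hb ((interval_invariant N u v huv a b h).mp ha)


lemma gammaP_zero {n k : ℕ} (τ : Fin k → Equiv.Perm (Fin n)) : gammaP τ 0 = 1 := by
  simp [gammaP]

lemma gammaP_succ {n k : ℕ} (τ : Fin k → Equiv.Perm (Fin n)) (m : ℕ) (hm : m < k) :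
    gammaP τ (m + 1) = gammaP τ m * τ ⟨m, hm⟩ := by
  have hlen : m < (List.ofFn τ).length := by simp [hm]
  rw [gammaP, gammaP, List.take_succ, List.getElem?_eq_getElem hlen, List.getElem_ofFn]
  simp

lemma gammaP_top {n k : ℕ} (τ : Fin k → Equiv.Perm (Fin n)) :
    gammaP τ k = (List.ofFn τ).prod := by
  rw [gammaP, List.take_of_length_le (by simp)]

section Chain

variable {n k : ℕ} (i j : Fin k → Fin n)

/-- the chain of partial products and complements, with exact cycle counts -/
lemma chain (hij : ∀ l, i l < j l) (hn : 0 < n) (hc1 : cycleCount (finRotate n) = 1)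
    (hγ : (fun l => Equiv.swap (i l) (j l)) ∈ SigmaSet n k) :
    ∀ m : ℕ, m ≤ k →
      cycleCount (gammaP (fun l => Equiv.swap (i l) (j l)) m) + m = n ∧
      cycleCount ((gammaP (fun l => Equiv.swap (i l) (j l)) m)⁻¹ * finRotate n) = m + 1 := by
  set τ : Fin k → Perm (Fin n) := fun l => Equiv.swap (i l) (j l) with hτ
  have hne : ∀ (m : ℕ) (hm : m < k), i ⟨m, hm⟩ ≠ j ⟨m, hm⟩ := fun m hm => ne_of_lt (hij _)
  have h1 : n - cycleCount ((List.ofFn τ).prod) = k := hγ.2.1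
  have h2 : n - cycleCount (finRotate n) =
      (n - cycleCount ((List.ofFn τ).prod)) +
      (n - cycleCount (((List.ofFn τ).prod)⁻¹ * finRotate n)) := hγ.2.2
  -- upper bounds on n for gammaP
  have hup : ∀ m, m ≤ k → n ≤ cycleCount (gammaP τ m) + m := by
    intro m
    induction m with
    | zero => intro _; rw [gammaP_zero, cycleCount_one]; omega
    | succ m ihm =>
      intro hm
      have h := (cycleCount_mul_swap_dichotomy (gammaP τ m) _ _ (hne m (by omega))).1
      rw [← gammaP_succ τ m (by omega)] at h
      have := ihm (by omega)
      omega
  have hΓle := cycleCount_le ((List.ofFn τ).prod)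
  have hΓpos := cycleCount_pos ((List.ofFn τ).prod) hn
  have hΓ : cycleCount ((List.ofFn τ).prod) + k = n := by
    have := hup k (le_refl k)
    rw [gammaP_top] at this
    omega
  have hkn : k + 1 ≤ n := by omega
  have hdown : ∀ d m, m + d = k → cycleCount (gammaP τ m) + m ≤ n := by
    intro d
    induction d with
    | zero =>
      intro m hm
      have : m = k := by omega
      rw [this, gammaP_top]
      omega
    | succ d ihd =>
      intro m hm
      have h := (cycleCount_mul_swap_dichotomy (gammaP τ m) _ _ (hne m (by omega))).1
      rw [← gammaP_succ τ m (by omega)] at h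
      have := ihd (m + 1) (by omega)
      omega
  have hγeq : ∀ m, m ≤ k → cycleCount (gammaP τ m) + m = n := by
    intro m hm
    have := hup m hm
    have := hdown (k - m) m (by omega)
    omega
  -- the μ chain
  have hμstep : ∀ (m : ℕ) (hm : m < k),
      (gammaP τ (m + 1))⁻¹ * finRotate n =
        Equiv.swap (i ⟨m, hm⟩) (j ⟨m, hm⟩) * ((gammaP τ m)⁻¹ * finRotate n) := by
    intro m hm
    rw [gammaP_succ τ m hm]
    simp only [hτ, mul_inv_rev, swap_inv]
    rw [mul_assoc]
  have hμ0 : (gammaP τ 0)⁻¹ * finRotate n = finRotate n := by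
    rw [gammaP_zero]; simp
  have hμkle := cycleCount_le (((List.ofFn τ).prod)⁻¹ * finRotate n)
  have hμkpos := cycleCount_pos (((List.ofFn τ).prod)⁻¹ * finRotate n) hn
  have hμk : cycleCount (((List.ofFn τ).prod)⁻¹ * finRotate n) = k + 1 := by
    rw [hc1] at h2
    omega
  have hμup : ∀ m, m ≤ k → cycleCount ((gammaP τ m)⁻¹ * finRotate n) ≤ m + 1 := by
    intro m
    induction m with
    | zero => intro _; rw [hμ0, hc1]
    | succ m ihm =>
      intro hm
      have h := (cycleCount_swap_mul_dichotomy ((gammaP τ m)⁻¹ * finRotate n) _ _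
        (hne m (by omega))).2
      rw [← hμstep m (by omega)] at h
      have := ihm (by omega)
      omega
  have hμdown : ∀ d m, m + d = k → m + 1 ≤ cycleCount ((gammaP τ m)⁻¹ * finRotate n) := by
    intro d
    induction d with
    | zero =>
      intro m hm
      have hmk : m = k := by omega
      rw [hmk, gammaP_top, hμk]
    | succ d ihd =>
      intro m hm
      have h := (cycleCount_swap_mul_dichotomy ((gammaP τ m)⁻¹ * finRotate n) _ _
        (hne m (by omega))).2
      rw [← hμstep m (by omega)] at h
      have := ihd (m + 1) (by omega)
      omega
  intro m hm
  refine ⟨hγeq m hm, ?_⟩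
  have := hμup m hm
  have := hμdown (k - m) m (by omega)
  omega

/-- the split facts on the μ chain -/
lemma chain_split (hij : ∀ l, i l < j l) (hn : 0 < n) (hc1 : cycleCount (finRotate n) = 1)
    (hγ : (fun l => Equiv.swap (i l) (j l)) ∈ SigmaSet n k) (m : ℕ) (hm : m < k) :
    ((gammaP (fun l => Equiv.swap (i l) (j l)) m)⁻¹ * finRotate n).SameCycle
      (i ⟨m, hm⟩) (j ⟨m, hm⟩) := by
  set τ : Fin k → Perm (Fin n) := fun l => Equiv.swap (i l) (j l) with hτ
  by_contra hcon
  have hmer := cycleCount_swap_mul_merge ((gammaP τ m)⁻¹ * finRotate n) _ _ hcon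
  have hμstep : (gammaP τ (m + 1))⁻¹ * finRotate n =
      Equiv.swap (i ⟨m, hm⟩) (j ⟨m, hm⟩) * ((gammaP τ m)⁻¹ * finRotate n) := by
    rw [gammaP_succ τ m hm]
    simp only [hτ, mul_inv_rev, swap_inv]
    rw [mul_assoc]
  rw [← hμstep] at hmer
  have e1 := (chain i j hij hn hc1 hγ m (by omega)).2
  have e2 := (chain i j hij hn hc1 hγ (m + 1) (by omega)).2
  rw [← hτ] at e1 e2
  omega

end Chain

lemma obstruction (N : ℕ) (π μ : Perm (Fin (N + 1))) (hc : π * μ = finRotate (N + 1))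
    (hL : cycleCount π + cycleCount μ = N + 2)
    (u v a b : Fin (N + 1)) (huv : u < v) (hab : a ≠ b)
    (h1 : π.SameCycle u v) (h2 : μ.SameCycle a b)
    (hai : u ≤ a ∧ a < v) (hbi : ¬(u ≤ b ∧ b < v)) : False := by
  have hρ : cycleCount (Equiv.swap u v * π) = cycleCount π + 1 :=
    cycleCount_swap_mul_split π u v (ne_of_lt huv) h1
  have hμ2 : cycleCount (μ * Equiv.swap a b) = cycleCount μ + 1 :=
    cycleCount_split μ a b hab h2
  have htri := cycleCount_triangle (Equiv.swap u v * π) (μ * Equiv.swap a b)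
  have heq : (Equiv.swap u v * π) * (μ * Equiv.swap a b) =
      (Equiv.swap u v * finRotate (N + 1)) * Equiv.swap a b := by
    rw [mul_assoc, ← mul_assoc π, hc, ← mul_assoc]
  rw [heq] at htri
  have hτ' : cycleCount (Equiv.swap u v * finRotate (N + 1)) = 2 := by
    rw [cycleCount_swap_mul_split _ u v (ne_of_lt huv) (sc_rot N u v), cycleCount_finRotate]
  have hmer : cycleCount (Equiv.swap u v * finRotate (N + 1)) =
      cycleCount ((Equiv.swap u v * finRotate (N + 1)) * Equiv.swap a b) + 1 :=
    cycleCount_merge _ a b (not_sc_rot N u v a b huv hai hbi)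
  omega

end NC

/-- If γ = ((i₁ j₁),…,(i_k j_k)) ∈ Σ_n(k) and l ∈ {1,…,k}, then every element of the cycle of
γ_{l−1} containing i_l + 1 is strictly greater than i_l. -/
theorem stmt5 (n k : ℕ) (i j : Fin k → Fin n) (hij : ∀ l, i l < j l)
    (hγ : (fun l => Equiv.swap (i l) (j l)) ∈ SigmaSet n k) (l : Fin k)
    (x : Fin n) (hx : (x : ℕ) = (i l : ℕ) + 1) :
    ∀ y, (gammaP (fun m => Equiv.swap (i m) (j m)) (l : ℕ)).SameCycle x y → i l < y := by
  intro y hxy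
  by_contra hcon
  have hy : y ≤ i l := not_lt.mp hcon
  have hn : 0 < n := lt_of_le_of_lt (Nat.zero_le _) x.isLt
  obtain ⟨N, rfl⟩ : ∃ N, n = N + 1 := ⟨n - 1, by omega⟩
  have hc1 : cycleCount (finRotate (N + 1)) = 1 := NC.cycleCount_finRotate N
  have hm : (l : ℕ) < k := l.isLt
  have hchain := NC.chain i j hij hn hc1 hγ (l : ℕ) (le_of_lt hm)
  have hsplit := NC.chain_split i j hij hn hc1 hγ (l : ℕ) hm
  have hl : (⟨(l : ℕ), hm⟩ : Fin k) = l := Fin.eta l hm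
  rw [hl] at hsplit
  refine NC.obstruction N (gammaP (fun m => Equiv.swap (i m) (j m)) (l : ℕ))
    ((gammaP (fun m => Equiv.swap (i m) (j m)) (l : ℕ))⁻¹ * finRotate (N + 1))
    (mul_inv_cancel_left _ _) (by omega) y x (i l) (j l) ?_ (ne_of_lt (hij l))
    hxy.symm hsplit ⟨hy, ?_⟩ ?_
  · have : (y : ℕ) < (x : ℕ) := by
      have := Fin.le_def.mp hy
      omega
    exact this
  · exact Fin.lt_def.mpr (by omega)
  · rintro ⟨-, hjx⟩
    have hj := Fin.lt_def.mp (hij l)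
    have := Fin.lt_def.mp hjx
    omega
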